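/- arXiv:1901.07516 — 3 statements merged into one kernel-verified Lean document; each statement's English description precedes it below -/
import Mathlib

section
/- Let H be a real Hilbert space, V_1,…,V_N closed subspaces of H, and suppose κ ≥ 2 is a constant such that d(x, V_I ∩ V_J) ≤ κ·max(d(x, V_I), d(x, V_J)) for all I, J ⊆ {1,…,N} and all x ∈ H. Let η ∈ (0,1] and γ > 0, set ε* := (1/2)·κ^{−N}, β* := (1 − η(2−η)ε*²)^{1/2}, and define constants C_1 := (2−η)^γ/(1−(1−η)^γ) and C_{ℓ+1} := C_ℓ + (C_ℓ + (2−η)^γ)/(1−β*^γ) for 1 ≤ ℓ < N. Then for every ℓ ∈ {1,…,N} the following holds: for all integers q ≥ p ≥ 0, if the control sequence (i_k)_{p≤k≤q} takes at most ℓ distinct values in {1,…,N} and λ_k ∈ [η, 2−η] for p ≤ k ≤ q, then any trajectory defined by x_{k+1} := P_{i_k,λ_k}(x_k) for k = p,…,q satisfies ∑_{k=p}^{q} ‖x_{k+1} − x_k‖^γ ≤ C_ℓ·‖x_p‖^γ. -/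
open Metric Finset RealInnerProductSpace Submodule

noncomputable def relaxProj {H : Type*} [NormedAddCommGroup H] [InnerProductSpace ℝ H]
    (V : Submodule ℝ H) [Submodule.HasOrthogonalProjection V] (l : ℝ) (x : H) : H :=
  (1 - l) • x + l • (Submodule.orthogonalProjectionOnto V x : H)

section aux
variable {H : Type*} [NormedAddCommGroup H] [InnerProductSpace ℝ H]
variable (V : Submodule ℝ H) [HasOrthogonalProjection V]

lemma relaxProj_eq (l : ℝ) (x : H) :
    relaxProj V l x = x - l • (x - (orthogonalProjectionOnto V x : H)) := by
  simp only [relaxProj, sub_smul, smul_sub, one_smul]; abel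

lemma relaxProj_sub_self (l : ℝ) (x : H) :
    relaxProj V l x - x = - (l • (x - (orthogonalProjectionOnto V x : H))) := by
  rw [relaxProj_eq]; abel

lemma norm_relaxProj_sub_self (l : ℝ) (x : H) :
    ‖relaxProj V l x - x‖ = |l| * ‖x - (orthogonalProjectionOnto V x : H)‖ := by
  rw [relaxProj_sub_self, norm_neg, norm_smul, Real.norm_eq_abs]

lemma relaxProj_sub (l : ℝ) (x z : H) (hz : z ∈ V) :
    relaxProj V l x - z = relaxProj V l (x - z) := by
  have h1 : (orthogonalProjectionOnto V (x - z) : H)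
      = (orthogonalProjectionOnto V x : H) - z := by
    rw [map_sub]
    simp [starProjection_eq_self_iff.2 hz]
  rw [relaxProj_eq, relaxProj_eq, h1]
  abel

lemma norm_relaxProj_sub_sq (l : ℝ) (x z : H) (hz : z ∈ V) :
    ‖relaxProj V l x - z‖ ^ 2
      = ‖x - z‖ ^ 2 - l * (2 - l) * ‖x - (orthogonalProjectionOnto V x : H)‖ ^ 2 := by
  set w : H := x - (orthogonalProjectionOnto V x : H) with hw
  have hwo : w ∈ Vᗮ := sub_starProjection_mem_orthogonal x
  have hxz : relaxProj V l x - z = (x - z) - l • w := by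
    rw [relaxProj_eq]; abel
  have hinner : ⟪x - z, l • w⟫ = l * ‖w‖ ^ 2 := by
    have hsplit : x - z = w + ((orthogonalProjectionOnto V x : H) - z) := by rw [hw]; abel
    have h0 : ⟪(orthogonalProjectionOnto V x : H) - z, w⟫ = (0 : ℝ) := by
      have := hwo _ (Submodule.sub_mem V (orthogonalProjectionOnto V x).2 hz)
      simpa [real_inner_comm] using this
    rw [real_inner_smul_right, hsplit, inner_add_left, real_inner_self_eq_norm_sq,
      h0]
    ring
  rw [hxz, norm_sub_sq_real, hinner, norm_smul, Real.norm_eq_abs, mul_pow, sq_abs]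
  ring

lemma norm_sub_orthProj_le (x z : H) (hz : z ∈ V) :
    ‖x - (orthogonalProjectionOnto V x : H)‖ ≤ ‖x - z‖ := by
  rw [coe_orthogonalProjectionOnto_apply, starProjection_minimal]
  exact ciInf_le ⟨0, by rintro b ⟨w, rfl⟩; exact norm_nonneg _⟩ (⟨z, hz⟩ : V)

lemma infDist_orthProj (x : H) :
    infDist x (V : Set H) = ‖x - (orthogonalProjectionOnto V x : H)‖ := by
  apply le_antisymm
  · have := infDist_le_dist_of_mem (x := x) (orthogonalProjectionOnto V x).2
    simpa [dist_eq_norm] using this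
  · by_contra h
    push_neg at h
    obtain ⟨y, hy, hlt⟩ := (infDist_lt_iff ⟨0, V.zero_mem⟩).1 h
    rw [dist_eq_norm] at hlt
    exact absurd (norm_sub_orthProj_le V x y hy) (by linarith)

lemma infDist_relaxProj_le (W : Submodule ℝ H) [HasOrthogonalProjection W]
    (hWV : W ≤ V) (l : ℝ) (hl0 : 0 ≤ l) (hl2 : l ≤ 2) (x : H) :
    infDist (relaxProj V l x) (W : Set H) ≤ infDist x (W : Set H) := by
  set z : H := (orthogonalProjectionOnto W x : H) with hzdef
  have hzW : z ∈ W := (orthogonalProjectionOnto W x).2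
  have h1 : ‖relaxProj V l x - z‖ ^ 2 ≤ ‖x - z‖ ^ 2 := by
    rw [norm_relaxProj_sub_sq V l x z (hWV hzW)]
    nlinarith [mul_nonneg (mul_nonneg hl0 (by linarith : (0:ℝ) ≤ 2 - l))
      (sq_nonneg ‖x - (orthogonalProjectionOnto V x : H)‖)]
  have h2 : ‖relaxProj V l x - z‖ ≤ ‖x - z‖ := by
    have := (pow_le_pow_iff_left₀ (norm_nonneg (relaxProj V l x - z)) (norm_nonneg (x - z))
      (two_ne_zero)).1 h1
    exact this
  calc infDist (relaxProj V l x) (W : Set H) ≤ dist (relaxProj V l x) z :=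
        infDist_le_dist_of_mem hzW
    _ ≤ ‖x - z‖ := by rw [dist_eq_norm]; exact h2
    _ = infDist x (W : Set H) := (infDist_orthProj W x).symm

lemma orthProj_relaxProj (l : ℝ) (x : H) :
    (orthogonalProjectionOnto V (relaxProj V l x) : H) = (orthogonalProjectionOnto V x : H) := by
  rw [relaxProj_eq, map_sub, map_smul]
  have : (orthogonalProjectionOnto V (x - (orthogonalProjectionOnto V x : H)) : H) = 0 := by
    rw [map_sub]
    simp [starProjection_eq_self_iff.2 (V.starProjection_apply_mem x)]
  rw [map_sub]
  push_cast
  simp only [orthogonalProjectionOnto_mem_subspace_eq_self]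
  rw [show (orthogonalProjectionOnto V x : H) - l • ((orthogonalProjectionOnto V x : H) - (orthogonalProjectionOnto V x : H)) = (orthogonalProjectionOnto V x : H) by simp]

lemma relaxProj_residual (l : ℝ) (x : H) :
    relaxProj V l x - (orthogonalProjectionOnto V (relaxProj V l x) : H)
      = (1 - l) • (x - (orthogonalProjectionOnto V x : H)) := by
  rw [orthProj_relaxProj, relaxProj_eq, sub_smul, one_smul, smul_sub]
  abel

end aux

section helpers

lemma sum_Icc_split (f : ℕ → ℝ) (p m q : ℕ) (h1 : p ≤ m + 1) (h2 : m ≤ q) :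
    ∑ k ∈ Icc p q, f k = ∑ k ∈ Icc p m, f k + ∑ k ∈ Icc (m + 1) q, f k := by
  rw [← Finset.sum_union (by simp only [Finset.disjoint_left, Finset.mem_Icc]; omega)]
  congr 1
  ext k
  simp only [Finset.mem_union, Finset.mem_Icc]
  omega

lemma geom_Icc_le (r : ℝ) (h0 : 0 ≤ r) (h1 : r < 1) (p q : ℕ) :
    ∑ k ∈ Icc p q, r ^ (k - p) ≤ 1 / (1 - r) := by
  have key : ∀ m, ∑ k ∈ Icc p (p + m), r ^ (k - p) = ∑ j ∈ range (m + 1), r ^ j := by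
    intro m
    induction m with
    | zero => simp
    | succ m ih =>
      rw [sum_Icc_split _ p (p + m) (p + (m + 1)) (by omega) (by omega), ih,
        show p + (m + 1) = (p + m) + 1 by omega]
      rw [Finset.Icc_self, Finset.sum_singleton, Finset.sum_range_succ,
       show p + m + 1 - p = m + 1 by omega, Finset.sum_range_succ,
        Finset.sum_range_succ]
  have h1r : (0:ℝ) < 1 - r := by linarith
  have hgeom : ∀ n : ℕ, ∑ j ∈ range n, r ^ j ≤ 1 / (1 - r) := by
    intro n
    have heq : ∑ j ∈ range n, r ^ j = (1 - r ^ n) / (1 - r) := by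
      rw [geom_sum_eq (by linarith) n, div_eq_div_iff (by linarith) (by linarith)]
      ring
    rw [heq]
    exact (div_le_div_iff_of_pos_right h1r).2 (by nlinarith [pow_nonneg h0 n])
  by_cases hpq : p ≤ q
  · obtain ⟨m, rfl⟩ : ∃ m, q = p + m := ⟨q - p, by omega⟩
    rw [key m]
    exact hgeom (m + 1)
  · rw [Finset.Icc_eq_empty (by omega)]
    simp only [Finset.sum_empty]
    have h1r : (0:ℝ) < 1 - r := by linarith
    positivity

variable {H : Type*} [NormedAddCommGroup H] [InnerProductSpace ℝ H] [CompleteSpace H]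
variable {N : ℕ} (V : Fin N → Submodule ℝ H) [∀ i, CompleteSpace (V i)]

lemma mV_hasOrth (S : Finset (Fin N)) :
    HasOrthogonalProjection (⨅ j ∈ S, V j : Submodule ℝ H) := by
  have hclosed : IsClosed ((⨅ j ∈ S, V j : Submodule ℝ H) : Set H) := by
    have h1 : ((⨅ j ∈ S, V j : Submodule ℝ H) : Set H)
        = ⋂ j, ⋂ (_ : j ∈ S), (V j : Set H) := by
      rw [Submodule.coe_iInf]
      exact Set.iInter_congr fun j => Submodule.coe_iInf _
    rw [h1]
    exact isClosed_iInter fun j => isClosed_iInter fun _ =>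
      (completeSpace_coe_iff_isComplete.1 inferInstance).isClosed
  haveI : CompleteSpace (⨅ j ∈ S, V j : Submodule ℝ H) := hclosed.completeSpace_coe
  infer_instance

lemma mV_mem {S : Finset (Fin N)} {z : H} :
    z ∈ (⨅ j ∈ S, V j : Submodule ℝ H) ↔ ∀ j ∈ S, z ∈ V j := by
  simp [Submodule.mem_iInf]

lemma mV_le {S : Finset (Fin N)} {j : Fin N} (hj : j ∈ S) :
    (⨅ j ∈ S, V j : Submodule ℝ H) ≤ V j := by
  intro z hz
  exact (mV_mem V).1 hz j hj

lemma mV_union (S T : Finset (Fin N)) :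
    (⨅ j ∈ S ∪ T, V j : Submodule ℝ H)
      = (⨅ j ∈ S, V j : Submodule ℝ H) ⊓ (⨅ j ∈ T, V j : Submodule ℝ H) := by
  ext z
  rw [Submodule.mem_inf, mV_mem V, mV_mem V, mV_mem V]
  constructor
  · intro h
    exact ⟨fun j hj => h j (Finset.mem_union_left _ hj),
      fun j hj => h j (Finset.mem_union_right _ hj)⟩
  · rintro ⟨h1, h2⟩ j hj
    rcases Finset.mem_union.1 hj with hj | hj
    exacts [h1 j hj, h2 j hj]

lemma mV_singleton (a : Fin N) :
    (⨅ j ∈ ({a} : Finset (Fin N)), V j : Submodule ℝ H) = V a := by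
  ext z
  rw [mV_mem V]
  simp

lemma mV_anti {S T : Finset (Fin N)} (h : S ⊆ T) :
    (⨅ j ∈ T, V j : Submodule ℝ H) ≤ (⨅ j ∈ S, V j : Submodule ℝ H) := by
  intro z hz
  exact (mV_mem V).2 fun j hj => (mV_mem V).1 hz j (h hj)

end helpers

set_option maxHeartbeats 4000000 in
/-- the induction statement P(ℓ): trajectories whose control sequence takes at
most ℓ distinct values have γ-moments bounded by C_ℓ. -/
theorem stmt_3 {H : Type*} [NormedAddCommGroup H] [InnerProductSpace ℝ H] [CompleteSpace H]
    (N : ℕ) (hN : 1 ≤ N) (V : Fin N → Submodule ℝ H) [∀ i, CompleteSpace (V i)]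
    (κ : ℝ) (hκ : 2 ≤ κ)
    (hreg : ∀ (I J : Finset (Fin N)) (x : H),
      infDist x ((((⨅ i ∈ I, V i) ⊓ ⨅ j ∈ J, V j) : Submodule ℝ H) : Set H) ≤
        κ * max (infDist x ((⨅ i ∈ I, V i : Submodule ℝ H) : Set H))
                (infDist x ((⨅ j ∈ J, V j : Submodule ℝ H) : Set H)))
    (η γ : ℝ) (hη : η ∈ Set.Ioc (0 : ℝ) 1) (hγ : 0 < γ)
    (ε β : ℝ) (hε : ε = (1 / 2) * (κ ^ N)⁻¹)
    (hβ : β = Real.sqrt (1 - η * (2 - η) * ε ^ 2))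
    (C : ℕ → ℝ) (hC1 : C 1 = (2 - η) ^ γ / (1 - (1 - η) ^ γ))
    (hCrec : ∀ l, 1 ≤ l → l < N →
      C (l + 1) = C l + (C l + (2 - η) ^ γ) / (1 - β ^ γ)) :
    ∀ l, 1 ≤ l → l ≤ N →
      ∀ p q : ℕ, p ≤ q →
      ∀ (i : ℕ → Fin N), ((Finset.Icc p q).image i).card ≤ l →
      ∀ (lam : ℕ → ℝ), (∀ k, p ≤ k → k ≤ q → lam k ∈ Set.Icc η (2 - η)) →
      ∀ x : ℕ → H, (∀ k, p ≤ k → k ≤ q → x (k + 1) = relaxProj (V (i k)) (lam k) (x k)) →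
        ∑ k ∈ Finset.Icc p q, ‖x (k + 1) - x k‖ ^ γ ≤ C l * ‖x p‖ ^ γ := by
  obtain ⟨hη0, hη1⟩ := hη
  have hκ0 : (0:ℝ) < κ := by linarith
  have hκ1 : (1:ℝ) ≤ κ := by linarith
  have hκN2 : (2:ℝ) ≤ κ ^ N := by
    calc (2:ℝ) = 2 ^ 1 := (pow_one 2).symm
    _ ≤ 2 ^ N := pow_le_pow_right₀ one_le_two hN
    _ ≤ κ ^ N := pow_le_pow_left₀ (by norm_num) hκ N
  have hε0 : 0 < ε := by rw [hε]; positivity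
  have hε4 : ε ≤ 1/4 := by
    rw [hε]
    have h1 : (κ ^ N)⁻¹ ≤ (2:ℝ)⁻¹ := by
      apply inv_anti₀ (by norm_num) hκN2
    nlinarith
  have hε2 : ε ^ 2 ≤ 1/16 := by nlinarith
  have hη2 : η * (2 - η) ≤ 1 := by nlinarith
  have hη2' : 0 < η * (2 - η) := by nlinarith
  have harg0 : 0 ≤ 1 - η * (2 - η) * ε ^ 2 := by nlinarith [sq_nonneg ε]
  have hβ0 : 0 ≤ β := hβ ▸ Real.sqrt_nonneg _
  have hβsq : β ^ 2 = 1 - η * (2 - η) * ε ^ 2 := by rw [hβ, Real.sq_sqrt harg0]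
  have hβ1 : β < 1 := by nlinarith [mul_pos hη2' (pow_pos hε0 2)]
  have hβ14 : 1/4 ≤ β := by nlinarith
  have hβγ1 : β ^ γ < 1 := Real.rpow_lt_one hβ0 hβ1 hγ
  have hβγ0 : 0 ≤ β ^ γ := Real.rpow_nonneg hβ0 _
  have h2ηγ0 : 0 ≤ (2 - η) ^ γ := Real.rpow_nonneg (by linarith) _
  have h1ηγ1 : (1 - η) ^ γ < 1 := Real.rpow_lt_one (by linarith) (by linarith) hγ
  have h1ηγ0 : 0 ≤ (1 - η) ^ γ := Real.rpow_nonneg (by linarith) _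
  have hCnn : ∀ m, 1 ≤ m → m ≤ N → 0 ≤ C m := by
    intro m hm
    induction m, hm using Nat.le_induction with
    | base =>
      intro _
      rw [hC1]
      exact div_nonneg h2ηγ0 (by linarith)
    | succ m hm ih =>
      intro hmN
      have h1 := ih (by omega)
      rw [hCrec m hm (by omega)]
      have : 0 ≤ (C m + (2 - η) ^ γ) / (1 - β ^ γ) := div_nonneg (by linarith) (by linarith)
      linarith
  have hpowpow : ∀ (a : ℝ), 0 ≤ a → ∀ m : ℕ, ((a ^ m : ℝ)) ^ γ = (a ^ γ) ^ m := by
    intro a ha m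
    rw [← Real.rpow_natCast a m, ← Real.rpow_mul ha, mul_comm, Real.rpow_mul ha,
      Real.rpow_natCast]
  intro l hl
  induction l, hl using Nat.le_induction with
  | base =>
    intro _ p q hpq i hcard lam hlam x hx
    have hpmem : p ∈ Icc p q := mem_Icc.2 ⟨le_rfl, hpq⟩
    have hione : ∀ k, p ≤ k → k ≤ q → i k = i p := by
      intro k h1 h2
      exact Finset.card_le_one.1 hcard _
        (Finset.mem_image_of_mem i (mem_Icc.2 ⟨h1, h2⟩)) _
        (Finset.mem_image_of_mem i hpmem)
    set d : ℕ → ℝ := fun k => ‖x k - (orthogonalProjectionOnto (V (i p)) (x k) : H)‖ with hd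
    have hdrec : ∀ k, p ≤ k → k ≤ q → d (k + 1) ≤ (1 - η) * d k := by
      intro k h1 h2
      obtain ⟨ha, hb⟩ := hlam k h1 h2
      have habs : |1 - lam k| ≤ 1 - η := abs_le.2 ⟨by linarith, by linarith⟩
      simp only [hd]
      rw [hx k h1 h2, hione k h1 h2, relaxProj_residual, norm_smul, Real.norm_eq_abs]
      exact mul_le_mul_of_nonneg_right habs (norm_nonneg _)
    have hdgeo : ∀ k, p ≤ k → k ≤ q + 1 → d k ≤ (1 - η) ^ (k - p) * d p := by
      intro k h1
      induction k, h1 using Nat.le_induction with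
      | base => intro _; simp
      | succ k hk ihk =>
        intro h2
        have hk2 : k ≤ q := by omega
        calc d (k + 1) ≤ (1 - η) * d k := hdrec k hk hk2
          _ ≤ (1 - η) * ((1 - η) ^ (k - p) * d p) :=
            mul_le_mul_of_nonneg_left (ihk (by omega)) (by linarith)
          _ = (1 - η) ^ (k + 1 - p) * d p := by
            rw [show k + 1 - p = (k - p) + 1 by omega, pow_succ]
            ring
    have hstepb : ∀ k ∈ Icc p q,
        ‖x (k + 1) - x k‖ ^ γ ≤ (2 - η) ^ γ * d p ^ γ * ((1 - η) ^ γ) ^ (k - p) := by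
      intro k hk
      obtain ⟨h1, h2⟩ := mem_Icc.1 hk
      obtain ⟨ha, hb⟩ := hlam k h1 h2
      have hstep1 : ‖x (k + 1) - x k‖ ≤ (2 - η) * ((1 - η) ^ (k - p) * d p) := by
        rw [hx k h1 h2, hione k h1 h2, norm_relaxProj_sub_self]
        have habs : |lam k| ≤ 2 - η := abs_le.2 ⟨by linarith, by linarith⟩
        calc |lam k| * d k ≤ (2 - η) * d k :=
            mul_le_mul_of_nonneg_right habs (norm_nonneg _)
          _ ≤ (2 - η) * ((1 - η) ^ (k - p) * d p) :=
            mul_le_mul_of_nonneg_left (hdgeo k h1 (by omega)) (by linarith)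
      have h3 := Real.rpow_le_rpow (norm_nonneg _) hstep1 hγ.le
      have h4 : ((2 - η) * ((1 - η) ^ (k - p) * d p)) ^ γ
          = (2 - η) ^ γ * d p ^ γ * ((1 - η) ^ γ) ^ (k - p) := by
        rw [Real.mul_rpow (by linarith)
            (mul_nonneg (pow_nonneg (by linarith) _) (norm_nonneg _)),
          Real.mul_rpow (pow_nonneg (by linarith) _) (norm_nonneg _),
          hpowpow (1 - η) (by linarith) (k - p)]
        ring
      rw [h4] at h3
      exact h3
    have hdpx : d p ^ γ ≤ ‖x p‖ ^ γ := by
      apply Real.rpow_le_rpow (norm_nonneg _) _ hγ.le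
      have := norm_sub_orthProj_le (V (i p)) (x p) 0 (Submodule.zero_mem _)
      simpa using this
    have h1r : 0 < 1 - (1 - η) ^ γ := by linarith
    calc ∑ k ∈ Icc p q, ‖x (k + 1) - x k‖ ^ γ
        ≤ ∑ k ∈ Icc p q, (2 - η) ^ γ * d p ^ γ * ((1 - η) ^ γ) ^ (k - p) :=
          Finset.sum_le_sum hstepb
      _ = (2 - η) ^ γ * d p ^ γ * ∑ k ∈ Icc p q, ((1 - η) ^ γ) ^ (k - p) := by
          rw [Finset.mul_sum]
      _ ≤ (2 - η) ^ γ * d p ^ γ * (1 / (1 - (1 - η) ^ γ)) := by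
          apply mul_le_mul_of_nonneg_left (geom_Icc_le _ h1ηγ0 h1ηγ1 p q)
          positivity
      _ = ((2 - η) ^ γ / (1 - (1 - η) ^ γ)) * d p ^ γ := by ring
      _ ≤ ((2 - η) ^ γ / (1 - (1 - η) ^ γ)) * ‖x p‖ ^ γ := by
          apply mul_le_mul_of_nonneg_left hdpx
          positivity
      _ = C 1 * ‖x p‖ ^ γ := by rw [hC1]
  | succ l hl ih =>
    intro hlN
    have hlN' : l ≤ N := by omega
    have ihl := ih hlN'
    have hCrec' := hCrec l hl (by omega)
    have hCl0 : 0 ≤ C l := hCnn l hl hlN'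
    have hCl10 : 0 ≤ C (l + 1) := hCnn (l + 1) (by omega) hlN
    have h1βγ : 0 < 1 - β ^ γ := by linarith
    have hfrac : C l + (2 - η) ^ γ ≤ (C l + (2 - η) ^ γ) / (1 - β ^ γ) := by
      rw [le_div_iff₀ h1βγ]
      nlinarith
    have hC2η : (2 - η) ^ γ ≤ C (l + 1) := by
      rw [hCrec']
      linarith
    have hCsum : C l + (2 - η) ^ γ ≤ C (l + 1) := by
      rw [hCrec']
      linarith
    have hCkey : C l + (2 - η) ^ γ + C (l + 1) * β ^ γ ≤ C (l + 1) := by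
      have heq : C (l + 1) * (1 - β ^ γ) = (1 - β ^ γ) * C l + (C l + (2 - η) ^ γ) := by
        rw [hCrec']
        field_simp
      nlinarith [mul_nonneg hCl0 hβγ0]
    have hsingle : ∀ (j : Fin N) (ll : ℝ), ll ∈ Set.Icc η (2 - η) → ∀ (y z : H), z ∈ V j →
        ‖relaxProj (V j) ll y - y‖ ≤ (2 - η) * ‖y - z‖ := by
      intro j ll hll y z hz
      rw [norm_relaxProj_sub_self]
      obtain ⟨h1, h2⟩ := hll
      have habs : |ll| ≤ 2 - η := abs_le.2 ⟨by linarith, by linarith⟩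
      calc |ll| * ‖y - (orthogonalProjectionOnto (V j) y : H)‖
          ≤ (2 - η) * ‖y - (orthogonalProjectionOnto (V j) y : H)‖ :=
            mul_le_mul_of_nonneg_right habs (norm_nonneg _)
        _ ≤ (2 - η) * ‖y - z‖ :=
            mul_le_mul_of_nonneg_left (norm_sub_orthProj_le _ y z hz) (by linarith)
    have key : ∀ n : ℕ, ∀ p q : ℕ, q - p ≤ n → p ≤ q →
        ∀ i : ℕ → Fin N, ((Icc p q).image i).card ≤ l + 1 →
        ∀ lam : ℕ → ℝ, (∀ k, p ≤ k → k ≤ q → lam k ∈ Set.Icc η (2 - η)) →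
        ∀ x : ℕ → H, (∀ k, p ≤ k → k ≤ q → x (k + 1) = relaxProj (V (i k)) (lam k) (x k)) →
        ∀ z : H, (∀ k, p ≤ k → k ≤ q → z ∈ V (i k)) →
        ∑ k ∈ Icc p q, ‖x (k + 1) - x k‖ ^ γ ≤ C (l + 1) * ‖x p - z‖ ^ γ := by
      intro n
      induction n with
      | zero =>
        intro p q hqp hpq i hcard lam hlam x hx z hz
        rw [show q = p from by omega, Finset.Icc_self, Finset.sum_singleton,
          hx p le_rfl hpq]
        have h1 := hsingle (i p) (lam p) (hlam p le_rfl hpq) (x p) z (hz p le_rfl hpq)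
        have h2 := Real.rpow_le_rpow (norm_nonneg _) h1 hγ.le
        rw [Real.mul_rpow (by linarith) (norm_nonneg _)] at h2
        calc ‖relaxProj (V (i p)) (lam p) (x p) - x p‖ ^ γ
            ≤ (2 - η) ^ γ * ‖x p - z‖ ^ γ := h2
          _ ≤ C (l + 1) * ‖x p - z‖ ^ γ :=
              mul_le_mul_of_nonneg_right hC2η (Real.rpow_nonneg (norm_nonneg _) γ)
      | succ n ihn =>
        intro p q hqp hpq i hcard lam hlam x hx z hz
        by_cases hqn : q - p ≤ n
        · exact ihn p q hqn hpq i hcard lam hlam x hx z hz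
        push_neg at hqn
        have hq1 : p + 1 ≤ q := by omega
        set S : Finset (Fin N) := (Icc p q).image i with hS
        haveI hOS : HasOrthogonalProjection (⨅ j ∈ S, V j : Submodule ℝ H) := mV_hasOrth V S
        set W : Submodule ℝ H := (⨅ j ∈ S, V j : Submodule ℝ H) with hW
        haveI hOW : HasOrthogonalProjection W := hOS
        have hiS : ∀ k, p ≤ k → k ≤ q → i k ∈ S := fun k h1 h2 =>
          Finset.mem_image_of_mem i (mem_Icc.2 ⟨h1, h2⟩)
        have hWle : ∀ k, p ≤ k → k ≤ q → W ≤ V (i k) := by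
          intro k h1 h2
          rw [hW]
          exact mV_le V (hiS k h1 h2)
        have hzW : z ∈ W := by
          rw [hW]
          refine (mV_mem V).2 fun j hj => ?_
          obtain ⟨k, hk, rfl⟩ := Finset.mem_image.1 hj
          obtain ⟨h1, h2⟩ := mem_Icc.1 hk
          exact hz k h1 h2
        set D : ℕ → ℝ := fun k => infDist (x k) (W : Set H) with hD
        have hD0 : ∀ k, 0 ≤ D k := fun k => infDist_nonneg
        have hWne : ((W : Set H)).Nonempty := ⟨0, W.zero_mem⟩
        have hDmono : ∀ k, p ≤ k → k ≤ q → D (k + 1) ≤ D k := by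
          intro k h1 h2
          obtain ⟨ha, hb⟩ := hlam k h1 h2
          simp only [hD]
          rw [hx k h1 h2]
          exact infDist_relaxProj_le (V (i k)) W (hWle k h1 h2) (lam k)
            (by linarith) (by linarith) (x k)
        have hDle : ∀ a b, p ≤ a → a ≤ b → b ≤ q + 1 → D b ≤ D a := by
          intro a b ha hab
          induction b, hab using Nat.le_induction with
          | base => intro _; exact le_rfl
          | succ b hb ihb =>
            intro h2
            exact (hDmono b (by omega) (by omega)).trans (ihb (by omega))
        have hstepD : ∀ k, p ≤ k → k ≤ q → ‖x (k + 1) - x k‖ ≤ (2 - η) * D k := by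
          intro k h1 h2
          rw [hx k h1 h2]
          have hz' : (orthogonalProjectionOnto W (x k) : H) ∈ V (i k) :=
            hWle k h1 h2 (orthogonalProjectionOnto W (x k)).2
          calc ‖relaxProj (V (i k)) (lam k) (x k) - x k‖
              ≤ (2 - η) * ‖x k - (orthogonalProjectionOnto W (x k) : H)‖ :=
                hsingle (i k) (lam k) (hlam k h1 h2) (x k) _ hz'
            _ = (2 - η) * D k := by
                simp only [hD]
                rw [infDist_orthProj]
        have hdrop : ∀ k, p ≤ k → k ≤ q →
            ε * D k ≤ infDist (x k) ((V (i k) : Set H)) → D (k + 1) ≤ β * D k := by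
          intro k h1 h2 hbig
          obtain ⟨ha, hb⟩ := hlam k h1 h2
          have hz'W : (orthogonalProjectionOnto W (x k) : H) ∈ W := (orthogonalProjectionOnto W (x k)).2
          have hz'V : (orthogonalProjectionOnto W (x k) : H) ∈ V (i k) := hWle k h1 h2 hz'W
          have hsq : ‖x (k + 1) - (orthogonalProjectionOnto W (x k) : H)‖ ^ 2
              = ‖x k - (orthogonalProjectionOnto W (x k) : H)‖ ^ 2
                - lam k * (2 - lam k) * ‖x k - (orthogonalProjectionOnto (V (i k)) (x k) : H)‖ ^ 2 := by
            rw [hx k h1 h2]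
            exact norm_relaxProj_sub_sq (V (i k)) (lam k) (x k) _ hz'V
          have hxkz : ‖x k - (orthogonalProjectionOnto W (x k) : H)‖ = D k := by
            simp only [hD]
            rw [infDist_orthProj]
          have hlam2 : η * (2 - η) ≤ lam k * (2 - lam k) := by nlinarith
          have hbig' : ε * D k ≤ ‖x k - (orthogonalProjectionOnto (V (i k)) (x k) : H)‖ := by
            rw [← infDist_orthProj]
            exact hbig
          have hdk2 : (ε * D k) ^ 2 ≤ ‖x k - (orthogonalProjectionOnto (V (i k)) (x k) : H)‖ ^ 2 :=
            pow_le_pow_left₀ (mul_nonneg hε0.le (hD0 k)) hbig' 2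
          have hfin : ‖x (k + 1) - (orthogonalProjectionOnto W (x k) : H)‖ ^ 2 ≤ (β * D k) ^ 2 := by
            rw [hsq, hxkz, mul_pow, hβsq]
            nlinarith [mul_le_mul_of_nonneg_left hdk2 hη2'.le,
              mul_le_mul_of_nonneg_right hlam2
                (sq_nonneg ‖x k - (orthogonalProjectionOnto (V (i k)) (x k) : H)‖)]
          have hDk1 : D (k + 1) ≤ ‖x (k + 1) - (orthogonalProjectionOnto W (x k) : H)‖ := by
            simp only [hD]
            rw [← dist_eq_norm]
            exact infDist_le_dist_of_mem hz'W
          have hβD : 0 ≤ β * D k := mul_nonneg hβ0 (hD0 k)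
          nlinarith [hDk1, hfin, norm_nonneg (x (k + 1) - (orthogonalProjectionOnto W (x k) : H))]
        have hclaim : ∀ a b, p ≤ a → a ≤ b → b ≤ q → S ⊆ (Icc a b).image i →
            ∃ m, a + 1 ≤ m ∧ m ≤ b + 1 ∧ D m ≤ β * D a := by
          intro a b hpa hab hbq hSsub
          by_cases hbig : ∃ k, a ≤ k ∧ k ≤ b ∧ ε * D k ≤ infDist (x k) ((V (i k) : Set H))
          · obtain ⟨k, hk1, hk2, hk3⟩ := hbig
            refine ⟨k + 1, by omega, by omega, ?_⟩
            calc D (k + 1) ≤ β * D k := hdrop k (by omega) (by omega) hk3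
              _ ≤ β * D a := mul_le_mul_of_nonneg_left (hDle a k hpa hk1 (by omega)) hβ0
          · push_neg at hbig
            have hsmall : ∀ k, a ≤ k → k ≤ b → infDist (x k) ((V (i k) : Set H)) ≤ ε * D a := by
              intro k h1 h2
              calc infDist (x k) ((V (i k) : Set H)) ≤ ε * D k := (hbig k h1 h2).le
                _ ≤ ε * D a :=
                  mul_le_mul_of_nonneg_left (hDle a k hpa h1 (by omega)) hε0.le
            have hTinv : ∀ k, a ≤ k → k ≤ b →
                infDist (x (k + 1)) ((⨅ j ∈ (Icc a k).image i, V j : Submodule ℝ H) : Set H)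
                  ≤ κ ^ (((Icc a k).image i).card - 1) * (ε * D a) := by
              intro k h1
              induction k, h1 using Nat.le_induction with
              | base =>
                intro hab'
                rw [show (Icc a a).image i = {i a} by
                  rw [Finset.Icc_self, Finset.image_singleton]]
                rw [mV_singleton V (i a), Finset.card_singleton]
                norm_num
                obtain ⟨ha1, ha2⟩ := hlam a (by omega) (by omega)
                have h2 : infDist (x (a + 1)) ((V (i a)) : Set H)
                    ≤ infDist (x a) ((V (i a)) : Set H) := by
                  rw [hx a (by omega) (by omega)]
                  exact infDist_relaxProj_le (V (i a)) (V (i a)) le_rfl (lam a)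
                    (by linarith) (by linarith) (x a)
                exact h2.trans (hsmall a le_rfl hab')
              | succ k hk ihk =>
                intro hk1b
                have ihk' := ihk (by omega)
                have hpk1 : p ≤ k + 1 := by omega
                have hk1q : k + 1 ≤ q := by omega
                obtain ⟨ha1, ha2⟩ := hlam (k + 1) hpk1 hk1q
                have hTk1 : (Icc a (k + 1)).image i = insert (i (k + 1)) ((Icc a k).image i) := by
                  rw [show Icc a (k + 1) = insert (k + 1) (Icc a k) by
                    ext m
                    simp only [mem_Icc, Finset.mem_insert]
                    omega]
                  rw [Finset.image_insert]
                have hTne : ((Icc a k).image i).Nonempty :=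
                  ⟨i a, Finset.mem_image_of_mem i (mem_Icc.2 ⟨le_rfl, hk⟩)⟩
                have hcardT1 : 1 ≤ ((Icc a k).image i).card := Finset.Nonempty.card_pos hTne
                have hκpow1 : (1 : ℝ) ≤ κ ^ (((Icc a k).image i).card - 1) :=
                  one_le_pow₀ hκ1
                by_cases hjT : i (k + 1) ∈ (Icc a k).image i
                · rw [hTk1, Finset.insert_eq_self.2 hjT]
                  have hle : (⨅ j ∈ (Icc a k).image i, V j : Submodule ℝ H) ≤ V (i (k + 1)) :=
                    mV_le V hjT
                  refine le_trans ?_ ihk'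
                  haveI := mV_hasOrth V ((Icc a k).image i)
                  rw [hx (k + 1) hpk1 hk1q]
                  exact infDist_relaxProj_le _ _ hle (lam (k + 1))
                    (by linarith) (by linarith) (x (k + 1))
                · have hreg' := hreg ((Icc a k).image i) {i (k + 1)} (x (k + 1))
                  rw [← mV_union V ((Icc a k).image i) {i (k + 1)}] at hreg'
                  rw [mV_singleton V (i (k + 1))] at hreg'
                  have hunion : (Icc a k).image i ∪ {i (k + 1)}
                      = insert (i (k + 1)) ((Icc a k).image i) := by
                    rw [Finset.union_comm, ← Finset.insert_eq]
                  rw [hunion] at hreg'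
                  have hmax := max_le ihk'
                    ((hsmall (k + 1) (by omega) hk1b).trans
                      (le_mul_of_one_le_left (mul_nonneg hε0.le (hD0 a)) hκpow1))
                  have hpow : κ * κ ^ (((Icc a k).image i).card - 1)
                      = κ ^ ((Icc a k).image i).card := by
                    rw [← pow_succ', Nat.sub_add_cancel hcardT1]
                  have hstep2 := hreg'.trans
                    ((mul_le_mul_of_nonneg_left hmax (by linarith : (0:ℝ) ≤ κ)).trans
                      (le_of_eq (by rw [← mul_assoc, hpow])))
                  have hcard2 : (insert (i (k + 1)) ((Icc a k).image i)).card
                      = ((Icc a k).image i).card + 1 := Finset.card_insert_of_notMem hjT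
                  rw [hTk1, hcard2, Nat.add_sub_cancel]
                  have hle : (⨅ j ∈ insert (i (k + 1)) ((Icc a k).image i), V j : Submodule ℝ H)
                      ≤ V (i (k + 1)) := mV_le V (Finset.mem_insert_self _ _)
                  refine le_trans ?_ hstep2
                  haveI := mV_hasOrth V (insert (i (k + 1)) ((Icc a k).image i))
                  rw [hx (k + 1) hpk1 hk1q]
                  exact infDist_relaxProj_le _ _ hle (lam (k + 1))
                    (by linarith) (by linarith) (x (k + 1))
            have hTb : (Icc a b).image i = S := by
              apply Finset.Subset.antisymm _ hSsub
              rw [hS]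
              exact Finset.image_subset_image (Finset.Icc_subset_Icc hpa hbq)
            have hfin := hTinv b hab le_rfl
            rw [hTb, ← hW] at hfin
            have hcardS1 : S.card - 1 ≤ N - 1 := by
              have h1 : S.card ≤ l + 1 := hcard
              omega
            have hκmono : κ ^ (S.card - 1) ≤ κ ^ (N - 1) := pow_le_pow_right₀ hκ1 hcardS1
            have hκN' : κ ^ (N - 1) * ε ≤ 1 / 4 := by
              rw [hε]
              have hNeq : κ ^ N = κ ^ (N - 1) * κ := by
                rw [← pow_succ]
                congr 1
                omega
              rw [hNeq]
              have hp0 : (0 : ℝ) < κ ^ (N - 1) := pow_pos hκ0 _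
              rw [mul_inv]
              have : κ ^ (N - 1) * (1 / 2 * ((κ ^ (N - 1))⁻¹ * κ⁻¹))
                  = 1 / 2 * κ⁻¹ * (κ ^ (N - 1) * (κ ^ (N - 1))⁻¹) := by ring
              rw [this, mul_inv_cancel₀ (ne_of_gt hp0), mul_one]
              have hκinv : κ⁻¹ ≤ 1 / 2 := by
                rw [inv_le_comm₀ (by linarith) (by norm_num)]
                linarith
              linarith
            refine ⟨b + 1, by omega, by omega, ?_⟩
            have h1 : D (b + 1) ≤ κ ^ (S.card - 1) * (ε * D a) := hfin
            have h2 : κ ^ (S.card - 1) * (ε * D a) ≤ 1 / 4 * D a := by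
              rw [← mul_assoc]
              exact mul_le_mul_of_nonneg_right
                ((mul_le_mul_of_nonneg_right hκmono hε0.le).trans hκN') (hD0 a)
            have h3 : 1 / 4 * D a ≤ β * D a := mul_le_mul_of_nonneg_right hβ14 (hD0 a)
            linarith
        have hDpz : D p ≤ ‖x p - z‖ := by
          have := infDist_le_dist_of_mem hzW (x := x p)
          rw [dist_eq_norm] at this
          exact this
        have hDpzγ : D p ^ γ ≤ ‖x p - z‖ ^ γ := Real.rpow_le_rpow (hD0 p) hDpz hγ.le
        have hDpγ0 : 0 ≤ D p ^ γ := Real.rpow_nonneg (hD0 p) γ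
        have hblock : ∀ b, p ≤ b → b ≤ q → ((Icc p b).image i).card ≤ l →
            ∑ k ∈ Icc p b, ‖x (k + 1) - x k‖ ^ γ ≤ C l * D p ^ γ := by
          intro b h1 h2 hcardb
          have hz0W : (orthogonalProjectionOnto W (x p) : H) ∈ W := (orthogonalProjectionOnto W (x p)).2
          set w : ℕ → H := fun k => x k - (orthogonalProjectionOnto W (x p) : H) with hw
          have hwtraj : ∀ k, p ≤ k → k ≤ b → w (k + 1) = relaxProj (V (i k)) (lam k) (w k) := by
            intro k hk1 hk2
            simp only [hw]
            rw [hx k hk1 (by omega),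
              ← relaxProj_sub (V (i k)) (lam k) (x k) _ (hWle k hk1 (by omega) hz0W)]
          have happ := ihl p b h1 i hcardb lam (fun k hk1 hk2 => hlam k hk1 (by omega)) w hwtraj
          have hsame : ∀ k, ‖w (k + 1) - w k‖ = ‖x (k + 1) - x k‖ := by
            intro k
            simp only [hw]
            congr 1
            abel
          have hEq : ∑ k ∈ Icc p b, ‖x (k + 1) - x k‖ ^ γ
              = ∑ k ∈ Icc p b, ‖w (k + 1) - w k‖ ^ γ :=
            Finset.sum_congr rfl fun k _ => by rw [hsame k]
          rw [hEq]
          have hwp : ‖w p‖ = D p := by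
            simp only [hw, hD]
            rw [infDist_orthProj]
          rw [hwp] at happ
          exact happ
        have hfq : ∀ b, p ≤ b → b ≤ q → ‖x (b + 1) - x b‖ ^ γ ≤ (2 - η) ^ γ * D p ^ γ := by
          intro b h1 h2
          have hb1 : ‖x (b + 1) - x b‖ ≤ (2 - η) * D p := by
            calc ‖x (b + 1) - x b‖ ≤ (2 - η) * D b := hstepD b h1 h2
              _ ≤ (2 - η) * D p :=
                mul_le_mul_of_nonneg_left (hDle p b le_rfl h1 (by omega)) (by linarith)
          have hb2 := Real.rpow_le_rpow (norm_nonneg _) hb1 hγ.le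
          rw [Real.mul_rpow (by linarith) (hD0 p)] at hb2
          exact hb2
        by_cases hA : ∃ s, (p + 1 ≤ s ∧ s ≤ q) ∧ D s ≤ β * D p
        · classical
          obtain ⟨⟨hs1, hs2⟩, hs3⟩ := Nat.find_spec hA
          set s := Nat.find hA with hsdef
          have hmin : ∀ m, p + 1 ≤ m → m ≤ q → m < s → β * D p < D m := by
            intro m h1 h2 h3
            have := Nat.find_min hA h3
            push_neg at this
            exact this ⟨h1, h2⟩
          have hrec : ∑ k ∈ Icc s q, ‖x (k + 1) - x k‖ ^ γ
              ≤ C (l + 1) * (β ^ γ * D p ^ γ) := by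
            have hcards : ((Icc s q).image i).card ≤ l + 1 := by
              refine le_trans (Finset.card_le_card ?_) hcard
              rw [hS]
              exact Finset.image_subset_image (Finset.Icc_subset_Icc (by omega) le_rfl)
            have hz'W : (orthogonalProjectionOnto W (x s) : H) ∈ W := (orthogonalProjectionOnto W (x s)).2
            have happ := ihn s q (by omega) hs2 i hcards lam
              (fun k h1 h2 => hlam k (by omega) h2) x (fun k h1 h2 => hx k (by omega) h2)
              (orthogonalProjectionOnto W (x s) : H)
              (fun k h1 h2 => hWle k (by omega) h2 hz'W)
            have h1 : ‖x s - (orthogonalProjectionOnto W (x s) : H)‖ = D s := by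
              simp only [hD]
              rw [infDist_orthProj]
            rw [h1] at happ
            have h2 : D s ^ γ ≤ β ^ γ * D p ^ γ := by
              have := Real.rpow_le_rpow (hD0 s) hs3 hγ.le
              rwa [Real.mul_rpow hβ0 (hD0 p)] at this
            calc ∑ k ∈ Icc s q, ‖x (k + 1) - x k‖ ^ γ ≤ C (l + 1) * D s ^ γ := happ
              _ ≤ C (l + 1) * (β ^ γ * D p ^ γ) := mul_le_mul_of_nonneg_left h2 hCl10
          by_cases hsp : s = p + 1
          · rw [sum_Icc_split _ p p q (by omega) (by omega), Finset.Icc_self,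
              Finset.sum_singleton]
            rw [hsp] at hrec
            have hfp := hfq p le_rfl hpq
            calc ‖x (p + 1) - x p‖ ^ γ + ∑ k ∈ Icc (p + 1) q, ‖x (k + 1) - x k‖ ^ γ
                ≤ (2 - η) ^ γ * D p ^ γ + C (l + 1) * (β ^ γ * D p ^ γ) := add_le_add hfp hrec
              _ = ((2 - η) ^ γ + C (l + 1) * β ^ γ) * D p ^ γ := by ring
              _ ≤ C (l + 1) * D p ^ γ :=
                  mul_le_mul_of_nonneg_right (by nlinarith) hDpγ0
              _ ≤ C (l + 1) * ‖x p - z‖ ^ γ := mul_le_mul_of_nonneg_left hDpzγ hCl10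
          · have hsp2 : p + 2 ≤ s := by omega
            have hcard1 : ((Icc p (s - 2)).image i).card ≤ l := by
              by_contra hge
              push_neg at hge
              have hsub : (Icc p (s - 2)).image i ⊆ S := by
                rw [hS]
                exact Finset.image_subset_image (Finset.Icc_subset_Icc le_rfl (by omega))
              have heq : (Icc p (s - 2)).image i = S :=
                Finset.eq_of_subset_of_card_le hsub (le_trans hcard hge)
              obtain ⟨m, hm1, hm2, hm3⟩ := hclaim p (s - 2) le_rfl (by omega) (by omega)
                (le_of_eq heq.symm)
              exact absurd hm3 (not_le.2 (hmin m hm1 (by omega) (by omega)))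
            rw [sum_Icc_split _ p (s - 1) q (by omega) (by omega),
              show s - 1 + 1 = s by omega,
              sum_Icc_split _ p (s - 2) (s - 1) (by omega) (by omega),
              show s - 2 + 1 = s - 1 by omega, Finset.Icc_self, Finset.sum_singleton]
            have hB1 := hblock (s - 2) (by omega) (by omega) hcard1
            have hB2 := hfq (s - 1) (by omega) (by omega)
            calc ∑ k ∈ Icc p (s - 2), ‖x (k + 1) - x k‖ ^ γ
                  + ‖x (s - 1 + 1) - x (s - 1)‖ ^ γ
                  + ∑ k ∈ Icc s q, ‖x (k + 1) - x k‖ ^ γ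
                ≤ C l * D p ^ γ + (2 - η) ^ γ * D p ^ γ + C (l + 1) * (β ^ γ * D p ^ γ) :=
                  add_le_add (add_le_add hB1 hB2) hrec
              _ = (C l + (2 - η) ^ γ + C (l + 1) * β ^ γ) * D p ^ γ := by ring
              _ ≤ C (l + 1) * D p ^ γ := mul_le_mul_of_nonneg_right hCkey hDpγ0
              _ ≤ C (l + 1) * ‖x p - z‖ ^ γ := mul_le_mul_of_nonneg_left hDpzγ hCl10
        · push_neg at hA
          have hcard1 : ((Icc p (q - 1)).image i).card ≤ l := by
            by_contra hge
            push_neg at hge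
            have hsub : (Icc p (q - 1)).image i ⊆ S := by
              rw [hS]
              exact Finset.image_subset_image (Finset.Icc_subset_Icc le_rfl (by omega))
            have heq : (Icc p (q - 1)).image i = S :=
              Finset.eq_of_subset_of_card_le hsub (le_trans hcard hge)
            obtain ⟨m, hm1, hm2, hm3⟩ := hclaim p (q - 1) le_rfl (by omega) (by omega)
              (le_of_eq heq.symm)
            exact absurd hm3 (not_le.2 (hA m ⟨hm1, by omega⟩))
          rw [sum_Icc_split _ p (q - 1) q (by omega) (by omega),
            show q - 1 + 1 = q by omega, Finset.Icc_self, Finset.sum_singleton]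
          have hB1 := hblock (q - 1) (by omega) (by omega) hcard1
          have hB2 := hfq q hpq le_rfl
          calc ∑ k ∈ Icc p (q - 1), ‖x (k + 1) - x k‖ ^ γ + ‖x (q + 1) - x q‖ ^ γ
              ≤ C l * D p ^ γ + (2 - η) ^ γ * D p ^ γ := add_le_add hB1 hB2
            _ = (C l + (2 - η) ^ γ) * D p ^ γ := by ring
            _ ≤ C (l + 1) * D p ^ γ := mul_le_mul_of_nonneg_right hCsum hDpγ0
            _ ≤ C (l + 1) * ‖x p - z‖ ^ γ := mul_le_mul_of_nonneg_left hDpzγ hCl10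
    intro p q hpq i hcard lam hlam x hx
    have h0 : ∀ k, p ≤ k → k ≤ q → (0 : H) ∈ V (i k) := fun k _ _ => Submodule.zero_mem _
    have hfinal := key (q - p) p q le_rfl hpq i hcard lam hlam x hx 0 h0
    simpa using hfinal
end

section
/- Let H be a real Hilbert space, V a closed subspace of H, η ∈ (0,1] and γ > 0. Suppose (λ_k)_{k≥0} is a sequence with λ_k ∈ [η, 2−η] for all k, and define a trajectory by x_{k+1} := P_{V,λ_k}(x_k) for k ≥ 0 starting from any x_0 ∈ H. Then ∑_{k=0}^∞ ‖x_{k+1} − x_k‖^γ ≤ ((2−η)^γ/(1−(1−η)^γ))·‖x_0‖^γ. -/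
open Metric

/-- moment bound for repeated relaxed projections onto a single subspace. -/
theorem stmt_4 {H : Type*} [NormedAddCommGroup H] [InnerProductSpace ℝ H] [CompleteSpace H]
    (V : Submodule ℝ H) [CompleteSpace V]
    (η γ : ℝ) (hη : η ∈ Set.Ioc (0 : ℝ) 1) (hγ : 0 < γ)
    (lam : ℕ → ℝ) (hlam : ∀ k, lam k ∈ Set.Icc η (2 - η))
    (x : ℕ → H) (hx : ∀ k, x (k + 1) = relaxProj V (lam k) (x k)) :
    Summable (fun k => ‖x (k + 1) - x k‖ ^ γ) ∧
    ∑' k, ‖x (k + 1) - x k‖ ^ γ ≤ ((2 - η) ^ γ / (1 - (1 - η) ^ γ)) * ‖x 0‖ ^ γ := by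
  obtain ⟨hη0, hη1⟩ := hη
  set q : ℕ → H := fun k => x k - (Submodule.orthogonalProjectionOnto V (x k) : H) with hq
  have hPP : ∀ k, (Submodule.orthogonalProjectionOnto V (x (k+1)) : H)
      = (1 - lam k) • (Submodule.orthogonalProjectionOnto V (x k) : H)
        + lam k • (Submodule.orthogonalProjectionOnto V (x k) : H) := by
    intro k
    rw [hx k, relaxProj, map_add, map_smul, map_smul,
      Submodule.orthogonalProjectionOnto_mem_subspace_eq_self]
    push_cast
    ring
  have hstep : ∀ k, q (k+1) = (1 - lam k) • q k := by
    intro k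
    simp only [hq]
    rw [hPP k, hx k, relaxProj]
    module
  -- bound on ‖q k‖
  have hq0 : ‖q 0‖ ≤ ‖x 0‖ := by
    have h := Submodule.starProjection_minimal (U := V) (x 0)
    rw [Submodule.starProjection_apply] at h
    simp only [hq]
    rw [h]
    have : (⨅ w : V, ‖x 0 - w‖) ≤ ‖x 0 - (0 : V)‖ :=
      ciInf_le ⟨0, by rintro _ ⟨w, rfl⟩; positivity⟩ (0 : V)
    simpa using this
  have hqk : ∀ k, ‖q k‖ ≤ (1 - η) ^ k * ‖x 0‖ := by
    intro k
    induction k with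
    | zero => simpa using hq0
    | succ n ih =>
      rw [hstep n, norm_smul]
      have h1 : |1 - lam n| ≤ 1 - η := by
        have := (hlam n).1; have := (hlam n).2
        rw [abs_le]; constructor <;> linarith
      calc ‖1 - lam n‖ * ‖q n‖ ≤ (1 - η) * ((1 - η) ^ n * ‖x 0‖) := by
            apply mul_le_mul (by simpa using h1) ih (norm_nonneg _)
            linarith
        _ = (1 - η) ^ (n + 1) * ‖x 0‖ := by ring
  -- bound on the step
  have hdiff : ∀ k, ‖x (k + 1) - x k‖ ≤ (2 - η) * ((1 - η) ^ k * ‖x 0‖) := by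
    intro k
    have : x (k + 1) - x k = (-(lam k)) • q k := by
      rw [hx k, relaxProj, hq]; module
    rw [this, norm_smul]
    have h2 : ‖-(lam k)‖ ≤ 2 - η := by
      rw [norm_neg, Real.norm_eq_abs, abs_of_nonneg (le_trans hη0.le (hlam k).1)]
      exact (hlam k).2
    exact mul_le_mul h2 (hqk k) (norm_nonneg _) (by linarith)
  set r : ℝ := (1 - η) ^ γ with hr
  have hη1' : (0:ℝ) ≤ 1 - η := by linarith
  have hr0 : 0 ≤ r := Real.rpow_nonneg hη1' γ
  have hr1 : r < 1 := by
    rcases eq_or_lt_of_le hη1' with h | h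
    · rw [hr, ← h, Real.zero_rpow hγ.ne']; norm_num
    · exact Real.rpow_lt_one hη1' (by linarith) hγ
  have hbound : ∀ k, ‖x (k + 1) - x k‖ ^ γ ≤ (2 - η) ^ γ * ‖x 0‖ ^ γ * r ^ k := by
    intro k
    calc ‖x (k + 1) - x k‖ ^ γ ≤ ((2 - η) * ((1 - η) ^ k * ‖x 0‖)) ^ γ :=
          Real.rpow_le_rpow (norm_nonneg _) (hdiff k) hγ.le
      _ = (2 - η) ^ γ * ‖x 0‖ ^ γ * r ^ k := by
          rw [Real.mul_rpow (by linarith) (by positivity),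
            Real.mul_rpow (by positivity) (norm_nonneg _), hr,
            ← Real.rpow_natCast (1 - η) k, ← Real.rpow_natCast ((1-η)^γ) k,
            ← Real.rpow_mul hη1', ← Real.rpow_mul hη1']
          ring_nf
  have hgeom : Summable (fun k : ℕ => (2 - η) ^ γ * ‖x 0‖ ^ γ * r ^ k) :=
    (summable_geometric_of_lt_one hr0 hr1).mul_left _
  have hsum : Summable (fun k => ‖x (k + 1) - x k‖ ^ γ) :=
    Summable.of_nonneg_of_le (fun k => Real.rpow_nonneg (norm_nonneg _) γ) hbound hgeom
  refine ⟨hsum, ?_⟩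
  calc ∑' k, ‖x (k + 1) - x k‖ ^ γ ≤ ∑' k, (2 - η) ^ γ * ‖x 0‖ ^ γ * r ^ k :=
        Summable.tsum_le_tsum hbound hsum hgeom
    _ = (2 - η) ^ γ * ‖x 0‖ ^ γ * (1 - r)⁻¹ := by
        rw [tsum_mul_left, tsum_geometric_of_lt_one hr0 hr1]
    _ = ((2 - η) ^ γ / (1 - r)) * ‖x 0‖ ^ γ := by ring
end

section
/- Let V and W be closed subspaces of a real Hilbert space H, let c := sup{ |⟨v,w⟩| : v ∈ V ∩ (V∩W)^⊥, w ∈ W ∩ (V∩W)^⊥, ‖v‖ ≤ 1, ‖w‖ ≤ 1 } (the supremum over the empty set being 0), and assume c < 1. Set κ := 2/√(1−c²). Then for every λ ∈ [0,2] and every x ∈ H, θ_{V∩W}(P_{W,λ}x) ≤ θ_{V∩W}(x) ≤ κ·max(θ_V(x), θ_W(x)). -/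
set_option maxHeartbeats 1000000


open Metric
open scoped RealInnerProductSpace

/-- The relative distance function `θ_V(x) = d(x,V)/‖x‖` (with `θ_V(0) = 0`). -/
noncomputable def relDist {H : Type*} [NormedAddCommGroup H] [InnerProductSpace ℝ H]
    (V : Submodule ℝ H) (x : H) : ℝ :=
  infDist x (V : Set H) / ‖x‖

section Aux
variable {H : Type*} [NormedAddCommGroup H] [InnerProductSpace ℝ H]

lemma infDist_submodule (K : Submodule ℝ H) [Submodule.HasOrthogonalProjection K] (x : H) :
    infDist x (K : Set H) = ‖x - Submodule.orthogonalProjectionOnto K x‖ := by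
  apply le_antisymm
  · simpa [dist_eq_norm] using infDist_le_dist_of_mem (Submodule.orthogonalProjectionOnto K x).2
  · rw [infDist_eq_iInf]
    apply le_ciInf
    rintro ⟨y, hy⟩
    rw [dist_eq_norm]
    have h1 : ⟪x - Submodule.orthogonalProjectionOnto K x, (Submodule.orthogonalProjectionOnto K x : H) - y⟫ = 0 := by
      apply Submodule.starProjection_inner_eq_zero
      exact sub_mem (Submodule.orthogonalProjectionOnto K x).2 hy
    have h2 : x - y = (x - Submodule.orthogonalProjectionOnto K x) + ((Submodule.orthogonalProjectionOnto K x : H) - y) := by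
      abel
    have h3 := norm_add_sq_real (x - Submodule.orthogonalProjectionOnto K x) ((Submodule.orthogonalProjectionOnto K x : H) - y)
    rw [h1] at h3
    rw [h2]
    nlinarith [norm_nonneg ((Submodule.orthogonalProjectionOnto K x : H) - y), norm_nonneg (x - (Submodule.orthogonalProjectionOnto K x : H)), norm_nonneg ((x - Submodule.orthogonalProjectionOnto K x : H) + ((Submodule.orthogonalProjectionOnto K x : H) - y))]

lemma cos_bound (V W : Submodule ℝ H) (c : ℝ)
    (hc : c = sSup {r : ℝ | ∃ v w : H, v ∈ V ⊓ (V ⊓ W)ᗮ ∧ w ∈ W ⊓ (V ⊓ W)ᗮ ∧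
      ‖v‖ ≤ 1 ∧ ‖w‖ ≤ 1 ∧ r = |⟪v, w⟫|}) :
    0 ≤ c ∧ ∀ v w : H, v ∈ V ⊓ (V ⊓ W)ᗮ → w ∈ W ⊓ (V ⊓ W)ᗮ →
      |⟪v, w⟫| ≤ c * ‖v‖ * ‖w‖ := by
  set S := {r : ℝ | ∃ v w : H, v ∈ V ⊓ (V ⊓ W)ᗮ ∧ w ∈ W ⊓ (V ⊓ W)ᗮ ∧
      ‖v‖ ≤ 1 ∧ ‖w‖ ≤ 1 ∧ r = |⟪v, w⟫|} with hS
  have hbdd : BddAbove S := by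
    refine ⟨1, ?_⟩
    rintro r ⟨v, w, hv, hw, h1, h2, rfl⟩
    calc |⟪v, w⟫| ≤ ‖v‖ * ‖w‖ := abs_real_inner_le_norm v w
      _ ≤ 1 := mul_le_one₀ h1 (norm_nonneg w) h2
  have h0 : (0 : ℝ) ∈ S := by
    refine ⟨0, 0, Submodule.zero_mem _, Submodule.zero_mem _, by simp, by simp, by simp⟩
  constructor
  · rw [hc]; exact le_csSup hbdd h0
  · intro v w hv hw
    by_cases hv0 : v = 0
    · simp [hv0]
    by_cases hw0 : w = 0
    · simp [hw0]
    have hvn : (0:ℝ) < ‖v‖ := norm_pos_iff.2 hv0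
    have hwn : (0:ℝ) < ‖w‖ := norm_pos_iff.2 hw0
    have hmem : |⟪‖v‖⁻¹ • v, ‖w‖⁻¹ • w⟫| ∈ S := by
      refine ⟨‖v‖⁻¹ • v, ‖w‖⁻¹ • w, Submodule.smul_mem _ _ hv, Submodule.smul_mem _ _ hw, ?_, ?_, rfl⟩
      · rw [norm_smul]; simp [abs_of_pos (inv_pos.2 hvn), inv_mul_cancel₀ hvn.ne']
      · rw [norm_smul]; simp [abs_of_pos (inv_pos.2 hwn), inv_mul_cancel₀ hwn.ne']
    have hle : |⟪‖v‖⁻¹ • v, ‖w‖⁻¹ • w⟫| ≤ c := by rw [hc]; exact le_csSup hbdd hmem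
    have heq : |⟪‖v‖⁻¹ • v, ‖w‖⁻¹ • w⟫| = ‖v‖⁻¹ * ‖w‖⁻¹ * |⟪v, w⟫| := by
      rw [real_inner_smul_left, real_inner_smul_right, abs_mul, abs_mul,
        abs_of_pos (inv_pos.2 hvn), abs_of_pos (inv_pos.2 hwn)]
      ring
    rw [heq] at hle
    have := mul_le_mul_of_nonneg_left hle (le_of_lt (mul_pos hvn hwn))
    calc |⟪v, w⟫| = ‖v‖ * ‖w‖ * (‖v‖⁻¹ * ‖w‖⁻¹ * |⟪v, w⟫|) := by
          field_simp
      _ ≤ ‖v‖ * ‖w‖ * c := this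
      _ = c * ‖v‖ * ‖w‖ := by ring

lemma proj_orth (V K : Submodule ℝ H) [CompleteSpace V] (hKV : K ≤ V) (x : H) (hx : x ∈ Kᗮ) :
    (Submodule.orthogonalProjectionOnto V x : H) ∈ Kᗮ := by
  rw [Submodule.mem_orthogonal]
  intro u hu
  have h1 : ⟪x - Submodule.orthogonalProjectionOnto V x, u⟫ = 0 :=
    Submodule.starProjection_inner_eq_zero x u (hKV hu)
  have h2 : ⟪u, x⟫ = 0 := (Submodule.mem_orthogonal _ _).1 hx u hu
  rw [inner_sub_left] at h1
  rw [real_inner_comm] at h2 ⊢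
  linarith

lemma core_ineq (V W : Submodule ℝ H) [CompleteSpace V] [CompleteSpace W] (c : ℝ) (h0 : 0 ≤ c)
    (hb : ∀ v w : H, v ∈ V ⊓ (V ⊓ W)ᗮ → w ∈ W ⊓ (V ⊓ W)ᗮ → |⟪v, w⟫| ≤ c * ‖v‖ * ‖w‖)
    (x : H) (hx : x ∈ (V ⊓ W)ᗮ) :
    (1 - c ^ 2) * ‖x‖ ^ 2 ≤
      2 * (‖x - Submodule.orthogonalProjectionOnto V x‖ ^ 2 + ‖x - Submodule.orthogonalProjectionOnto W x‖ ^ 2) := by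
  set p := (Submodule.orthogonalProjectionOnto V x : H) with hpdef
  set q := (Submodule.orthogonalProjectionOnto W x : H) with hqdef
  have hpV : p ∈ V := (Submodule.orthogonalProjectionOnto V x).2
  have hqW : q ∈ W := (Submodule.orthogonalProjectionOnto W x).2
  have hp : p ∈ V ⊓ (V ⊓ W)ᗮ := ⟨hpV, proj_orth V _ inf_le_left x hx⟩
  have hq : q ∈ W ⊓ (V ⊓ W)ᗮ := ⟨hqW, proj_orth W _ inf_le_right x hx⟩
  have hpq : |⟪p, q⟫| ≤ c * ‖p‖ * ‖q‖ := hb p q hp hq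
  have hxp : ⟪x, p⟫ = ‖p‖ ^ 2 := by
    have h : ⟪x - p, p⟫ = 0 := Submodule.starProjection_inner_eq_zero x p hpV
    rw [inner_sub_left] at h
    have h2 : ⟪p, p⟫ = ‖p‖ ^ 2 := real_inner_self_eq_norm_sq p
    linarith
  have hxq : ⟪x, q⟫ = ‖q‖ ^ 2 := by
    have h : ⟪x - q, q⟫ = 0 := Submodule.starProjection_inner_eq_zero x q hqW
    rw [inner_sub_left] at h
    have h2 : ⟪q, q⟫ = ‖q‖ ^ 2 := real_inner_self_eq_norm_sq q
    linarith
  have hdp : ‖x - p‖ ^ 2 = ‖x‖ ^ 2 - ‖p‖ ^ 2 := by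
    rw [norm_sub_sq_real, real_inner_comm]
    rw [real_inner_comm] at hxp
    rw [hxp]; ring
  have hdq : ‖x - q‖ ^ 2 = ‖x‖ ^ 2 - ‖q‖ ^ 2 := by
    rw [norm_sub_sq_real, real_inner_comm]
    rw [real_inner_comm] at hxq
    rw [hxq]; ring
  have hsum : ⟪x, p + q⟫ = ‖p‖ ^ 2 + ‖q‖ ^ 2 := by rw [inner_add_right, hxp, hxq]
  have h1 : ‖p‖ ^ 2 + ‖q‖ ^ 2 ≤ ‖x‖ * ‖p + q‖ := by
    rw [← hsum]; exact real_inner_le_norm x (p + q)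
  have h2 : ‖p + q‖ ^ 2 ≤ (1 + c) * (‖p‖ ^ 2 + ‖q‖ ^ 2) := by
    rw [norm_add_sq_real]
    have h3 : ⟪p, q⟫ ≤ c * ‖p‖ * ‖q‖ := le_of_abs_le hpq
    nlinarith [sq_nonneg (‖p‖ - ‖q‖), mul_nonneg (mul_nonneg h0 (norm_nonneg p)) (norm_nonneg q)]
  have hS : ‖p‖ ^ 2 + ‖q‖ ^ 2 ≤ (1 + c) * ‖x‖ ^ 2 := by
    have hSnn : 0 ≤ ‖p‖ ^ 2 + ‖q‖ ^ 2 := by positivity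
    rcases eq_or_lt_of_le hSnn with h | h
    · nlinarith [sq_nonneg ‖x‖]
    · have hsq : (‖p‖ ^ 2 + ‖q‖ ^ 2) ^ 2 ≤ ‖x‖ ^ 2 * ((1 + c) * (‖p‖ ^ 2 + ‖q‖ ^ 2)) := by
        calc (‖p‖ ^ 2 + ‖q‖ ^ 2) ^ 2 ≤ (‖x‖ * ‖p + q‖) ^ 2 := by
              nlinarith [mul_nonneg (norm_nonneg x) (norm_nonneg (p + q))]
          _ = ‖x‖ ^ 2 * ‖p + q‖ ^ 2 := by ring
          _ ≤ ‖x‖ ^ 2 * ((1 + c) * (‖p‖ ^ 2 + ‖q‖ ^ 2)) := by nlinarith [sq_nonneg ‖x‖]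
      nlinarith
  nlinarith [mul_nonneg (sq_nonneg (c - 1)) (sq_nonneg ‖x‖)]

end Aux

/-- `θ_{V∩W}(P_{W,λ}x) ≤ θ_{V∩W}(x) ≤ κ·max(θ_V(x), θ_W(x))` with
`κ = 2/√(1−c²)`, `c = cos φ(V,W)`. -/
theorem stmt_12 {H : Type*} [NormedAddCommGroup H] [InnerProductSpace ℝ H] [CompleteSpace H]
    (V W : Submodule ℝ H) [CompleteSpace V] [CompleteSpace W]
    (c : ℝ)
    (hc : c = sSup {r : ℝ | ∃ v w : H, v ∈ V ⊓ (V ⊓ W)ᗮ ∧ w ∈ W ⊓ (V ⊓ W)ᗮ ∧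
      ‖v‖ ≤ 1 ∧ ‖w‖ ≤ 1 ∧ r = |⟪v, w⟫|})
    (hc1 : c < 1) (κ : ℝ) (hκ : κ = 2 / Real.sqrt (1 - c ^ 2))
    (l : ℝ) (hl : l ∈ Set.Icc (0 : ℝ) 2) (x : H) :
    relDist (V ⊓ W) (relaxProj W l x) ≤ relDist (V ⊓ W) x ∧
    relDist (V ⊓ W) x ≤ κ * max (relDist V x) (relDist W x) := by
  obtain ⟨hl0, hl2⟩ := hl
  obtain ⟨hc0, hbnd⟩ := cos_bound V W c hc
  haveI hUc : CompleteSpace (V ⊓ W : Submodule ℝ H) := by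
    have hV : IsClosed (V : Set H) :=
      (completeSpace_coe_iff_isComplete.mp ‹_›).isClosed
    have hW : IsClosed (W : Set H) :=
      (completeSpace_coe_iff_isComplete.mp ‹_›).isClosed
    have hcl : IsClosed ((V ⊓ W : Submodule ℝ H) : Set H) := by
      rw [Submodule.coe_inf]; exact hV.inter hW
    exact hcl.completeSpace_coe
  set U : Submodule ℝ H := V ⊓ W with hUdef
  set u : H := (Submodule.orthogonalProjectionOnto U x : H) with hudef
  set y : H := x - u with hydef
  have huU : u ∈ U := (Submodule.orthogonalProjectionOnto U x).2
  have hyU : y ∈ Uᗮ := Submodule.sub_starProjection_mem_orthogonal x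
  have hinner_uy : ⟪u, y⟫ = 0 := (Submodule.mem_orthogonal _ _).1 hyU u huU
  have hx_eq : x = u + y := by rw [hydef]; abel
  have hnx : ‖x‖ ^ 2 = ‖u‖ ^ 2 + ‖y‖ ^ 2 := by
    conv_lhs => rw [hx_eq]
    rw [norm_add_sq_real, hinner_uy]; ring
  have hdU : infDist x (U : Set H) = ‖y‖ := by rw [infDist_submodule]
  constructor
  · -- Part 1
    set b : H := (Submodule.orthogonalProjectionOnto W y : H) with hbdef
    set z : H := (1 - l) • y + l • b with hzdef
    have hbW : b ∈ W := (Submodule.orthogonalProjectionOnto W y).2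
    have hbU : b ∈ Uᗮ := proj_orth W U inf_le_right y hyU
    have hzU : z ∈ Uᗮ := Submodule.add_mem _ (Submodule.smul_mem _ _ hyU)
      (Submodule.smul_mem _ _ hbU)
    have hPWx : (Submodule.orthogonalProjectionOnto W x : H) = u + b := by
      conv_lhs => rw [hx_eq]
      rw [map_add, Submodule.coe_add]
      congr 1
      exact Submodule.starProjection_eq_self_iff.2 huU.2
    have hproj : relaxProj W l x = u + z := by
      rw [relaxProj, hPWx, hzdef]
      conv_lhs => rw [hx_eq]
      module
    have hyb : ⟪y, b⟫ = ‖b‖ ^ 2 := by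
      have h : ⟪y - b, b⟫ = 0 := Submodule.starProjection_inner_eq_zero y b hbW
      rw [inner_sub_left] at h
      have h2 : ⟪b, b⟫ = ‖b‖ ^ 2 := real_inner_self_eq_norm_sq b
      linarith
    have hby : ‖b‖ ^ 2 ≤ ‖y‖ ^ 2 := by
      have h := real_inner_le_norm y b
      rw [hyb] at h
      nlinarith [norm_nonneg b, norm_nonneg y]
    have hz2 : ‖z‖ ^ 2 ≤ ‖y‖ ^ 2 := by
      have hby' : ⟪b, y⟫ = ‖b‖ ^ 2 := by rw [real_inner_comm]; exact hyb
      have hexp : ‖z‖ ^ 2 = (1 - l) ^ 2 * ‖y‖ ^ 2 + (2 * (1 - l) * l + l ^ 2) * ‖b‖ ^ 2 := by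
        rw [← real_inner_self_eq_norm_sq, hzdef]
        simp only [inner_add_left, inner_add_right, real_inner_smul_left, real_inner_smul_right,
          real_inner_self_eq_norm_sq, hyb, hby', norm_smul, mul_pow, Real.norm_eq_abs, sq_abs]
        ring
      nlinarith [mul_nonneg (mul_nonneg hl0 (sub_nonneg.2 hl2)) (sub_nonneg.2 hby)]
    have hinner_uz : ⟪u, z⟫ = 0 := (Submodule.mem_orthogonal _ _).1 hzU u huU
    have hnuz : ‖u + z‖ ^ 2 = ‖u‖ ^ 2 + ‖z‖ ^ 2 := by
      rw [norm_add_sq_real, hinner_uz]; ring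
    have hdPU : infDist (u + z) (U : Set H) = ‖z‖ := by
      have hP : ((Submodule.orthogonalProjectionOnto U (u + z) : U) : H) = u :=
        Submodule.eq_starProjection_of_mem_of_inner_eq_zero huU (fun w hw => by
          have h5 := (Submodule.mem_orthogonal _ _).1 hzU w hw
          rw [real_inner_comm] at h5
          simpa using h5)
      rw [infDist_submodule, hP]
      simp
    rw [hproj, relDist, relDist, hdU, hdPU]
    by_cases huz : ‖u + z‖ = 0
    · rw [huz, div_zero]
      exact div_nonneg (norm_nonneg y) (norm_nonneg x)
    · have huzpos : 0 < ‖u + z‖ := (norm_nonneg _).lt_of_ne (Ne.symm huz)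
      have hx2 : 0 < ‖x‖ ^ 2 := by nlinarith [hnx, hnuz, hz2, mul_pos huzpos huzpos]
      have hxpos : 0 < ‖x‖ := by nlinarith [norm_nonneg x, hx2]
      rw [div_le_div_iff₀ huzpos hxpos]
      have hsq : (‖z‖ * ‖x‖) ^ 2 ≤ (‖y‖ * ‖u + z‖) ^ 2 := by
        nlinarith [mul_nonneg (sq_nonneg ‖u‖) (sub_nonneg.2 hz2), hnx, hnuz, hz2,
          sq_nonneg ‖u‖, sq_nonneg ‖z‖]
      nlinarith [hsq, mul_nonneg (norm_nonneg z) (norm_nonneg x),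
        mul_nonneg (norm_nonneg y) (norm_nonneg (u + z))]
  · -- Part 2
    set p : H := (Submodule.orthogonalProjectionOnto V y : H) with hpdef
    set q : H := (Submodule.orthogonalProjectionOnto W y : H) with hqdef
    have hcore := core_ineq V W c hc0 hbnd y hyU
    have hdV : infDist x (V : Set H) = ‖y - p‖ := by
      have hPVx : (Submodule.orthogonalProjectionOnto V x : H) = u + p := by
        conv_lhs => rw [hx_eq]
        rw [map_add, Submodule.coe_add]
        congr 1
        exact Submodule.starProjection_eq_self_iff.2 huU.1
      rw [infDist_submodule, hPVx]
      congr 1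
      rw [hx_eq]; abel
    have hdW : infDist x (W : Set H) = ‖y - q‖ := by
      have hPWx : (Submodule.orthogonalProjectionOnto W x : H) = u + q := by
        conv_lhs => rw [hx_eq]
        rw [map_add, Submodule.coe_add]
        congr 1
        exact Submodule.starProjection_eq_self_iff.2 huU.2
      rw [infDist_submodule, hPWx]
      congr 1
      rw [hx_eq]; abel
    have hc2 : 0 < 1 - c ^ 2 := by nlinarith
    have hsqrt : 0 < Real.sqrt (1 - c ^ 2) := Real.sqrt_pos.2 hc2
    have hκ0 : 0 < κ := by rw [hκ]; positivity
    have hk2 : κ ^ 2 * (1 - c ^ 2) = 4 := by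
      rw [hκ, div_pow, Real.sq_sqrt hc2.le]
      field_simp
      norm_num
    set m : ℝ := max ‖y - p‖ ‖y - q‖ with hmdef
    have hm0 : 0 ≤ m := le_trans (norm_nonneg _) (le_max_left _ _)
    have hmp : ‖y - p‖ ^ 2 ≤ m ^ 2 := by
      nlinarith [le_max_left ‖y - p‖ ‖y - q‖, norm_nonneg (y - p)]
    have hmq : ‖y - q‖ ^ 2 ≤ m ^ 2 := by
      nlinarith [le_max_right ‖y - p‖ ‖y - q‖, norm_nonneg (y - q)]
    have hy2 : ‖y‖ ^ 2 ≤ κ ^ 2 * m ^ 2 := by nlinarith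
    have hykm : ‖y‖ ≤ κ * m := by
      nlinarith [norm_nonneg y, mul_nonneg hκ0.le hm0]
    rw [relDist, relDist, relDist, hdU, hdV, hdW]
    by_cases hx0 : ‖x‖ = 0
    · rw [hx0]
      norm_num
    · have hxpos : 0 < ‖x‖ := (norm_nonneg _).lt_of_ne (Ne.symm hx0)
      rw [max_div_div_right hxpos.le, ← mul_div_assoc, div_le_div_iff₀ hxpos hxpos]
      nlinarith [mul_pos hxpos hxpos]
end
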